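/- For all real numbers A, B, C, the alternating bilinear bracket on ℝ³ determined on the standard basis (X₁, X₂, X₃) by ⁅X₁, X₂⁆ = X₃, ⁅X₁, X₃⁆ = A•X₁ + B•X₂, ⁅X₂, X₃⁆ = C•X₁ − A•X₂ satisfies the Jacobi identity, and hence defines a Lie algebra structure on ℝ³. (This gives the 3-dimensional family of 3-dimensional Lie groups carrying homogeneous contact structures, including SO(3), SL(2,ℝ) and E(1,1).) -/
import Mathlib

noncomputable def contactBr (A B C : ℝ) : (Fin 3 → ℝ) →ₗ[ℝ] (Fin 3 → ℝ) →ₗ[ℝ] (Fin 3 → ℝ) :=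
  LinearMap.mk₂ ℝ
    (fun x y => ![A * (x 0 * y 2 - x 2 * y 0) + C * (x 1 * y 2 - x 2 * y 1),
                  B * (x 0 * y 2 - x 2 * y 0) - A * (x 1 * y 2 - x 2 * y 1),
                  x 0 * y 1 - x 1 * y 0])
    (by intro x x' y; funext i; fin_cases i <;> simp [Pi.add_apply] <;> ring)
    (by intro c x y; funext i; fin_cases i <;> simp [Pi.smul_apply, smul_eq_mul] <;> ring)
    (by intro x y y'; funext i; fin_cases i <;> simp [Pi.add_apply] <;> ring)
    (by intro c x y; funext i; fin_cases i <;> simp [Pi.smul_apply, smul_eq_mul] <;> ring)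

/-- For all real `A`, `B`, `C`, the alternating bilinear bracket on `ℝ³` determined on the
standard basis `X₁, X₂, X₃` by `⁅X₁, X₂⁆ = X₃`, `⁅X₁, X₃⁆ = A•X₁ + B•X₂`,
`⁅X₂, X₃⁆ = C•X₁ - A•X₂` satisfies the Jacobi identity, and hence defines a Lie algebra
structure on `ℝ³`. -/
theorem contactGroup_bracket_jacobi (A B C : ℝ) :
    ∃ Br : (Fin 3 → ℝ) →ₗ[ℝ] (Fin 3 → ℝ) →ₗ[ℝ] (Fin 3 → ℝ),
      (∀ x, Br x x = 0) ∧
      Br (Pi.single 0 1) (Pi.single 1 1) = (Pi.single 2 1 : Fin 3 → ℝ) ∧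
      Br (Pi.single 0 1) (Pi.single 2 1) =
        A • (Pi.single 0 1 : Fin 3 → ℝ) + B • (Pi.single 1 1 : Fin 3 → ℝ) ∧
      Br (Pi.single 1 1) (Pi.single 2 1) =
        C • (Pi.single 0 1 : Fin 3 → ℝ) - A • (Pi.single 1 1 : Fin 3 → ℝ) ∧
      ∀ x y z : Fin 3 → ℝ, Br x (Br y z) + Br y (Br z x) + Br z (Br x y) = 0 := by
  refine ⟨contactBr A B C, ?_, ?_, ?_, ?_, ?_⟩
  · intro x; funext i; fin_cases i <;> simp [contactBr] <;> ring
  · funext i; fin_cases i <;>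
      simp [contactBr, Pi.single_apply]
  · funext i; fin_cases i <;>
      simp [contactBr, Pi.single_apply]
  · funext i; fin_cases i <;>
      simp [contactBr, Pi.single_apply]
  · intro x y z; funext i; fin_cases i <;>
      simp [contactBr] <;> ring
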